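/- Fix λ_1 ≥ λ_2 ≥ ... ≥ λ_n ≥ 0 and a permutation w ∈ S_{n-1} with associated vector (r_1, ..., r_{n-1}). The face GZ(λ, w) of the Gelfand-Zetlin polytope GZ(λ), cut out by the equations x_{i,i+j} = x_{i,i+j-1} for i ∈ [1, r_j - 1] and x_{i,i+j} = x_{i+1,i+j} for i ∈ [r_j + 1, n - j] (for all j ∈ [1, n-1]), has dimension n - 1 whenever λ_1 > λ_2 > ... > λ_n. -/

import Mathlib

/-- Index type for the strictly-upper-triangular entries `x_{k,ℓ}`, `1 ≤ k < ℓ ≤ n`. -/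
abbrev GZIdx (n : ℕ) := {p : Fin n × Fin n // p.1 < p.2}

/-- The entry `x_{i,j}` (1-based indices), with the convention `x_{i,i} = λ_i`,
and junk value `0` outside the triangular range. -/
def GZX {n : ℕ} (lam : Fin n → ℝ) (x : GZIdx n → ℝ) (i j : ℕ) : ℝ :=
  if h : 1 ≤ i ∧ i ≤ j ∧ j ≤ n then
    if hij : i < j then
      x ⟨(⟨i - 1, by omega⟩, ⟨j - 1, by omega⟩), Fin.mk_lt_mk.mpr (by omega)⟩
    else lam ⟨i - 1, by omega⟩
  else 0

/-- The Gelfand-Zetlin polytope `GZ(λ)`: in every configuration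
`a = x_{i,j}`, `b = x_{i,j+1}`, `c = x_{i+1,j+1}` one has `a ≥ b ≥ c`. -/
def GZpoly {n : ℕ} (lam : Fin n → ℝ) : Set (GZIdx n → ℝ) :=
  {x | ∀ i j : ℕ, 1 ≤ i → i ≤ j → j + 1 ≤ n →
    GZX lam x i (j + 1) ≤ GZX lam x i j ∧
    GZX lam x (i + 1) (j + 1) ≤ GZX lam x i (j + 1)}

/-- `rvecL w j`: the rank of `w⁻¹ j` counted from the largest among
`w⁻¹ j, ..., w⁻¹ (m-1)` (0-based indexing). -/
def rvecL {m : ℕ} (w : Equiv.Perm (Fin m)) (j : Fin m) : ℕ :=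
  (Finset.univ.filter (fun k : Fin m => j ≤ k ∧ w⁻¹ j ≤ w⁻¹ k)).card

/-- 1-based version of `rvecL`. -/
def rv {m : ℕ} (w : Equiv.Perm (Fin m)) (j : ℕ) : ℕ :=
  if h : 1 ≤ j ∧ j ≤ m then rvecL w ⟨j - 1, by omega⟩ else 0

/-- The face `GZ(λ, w)` of the Gelfand-Zetlin polytope attached to `w ∈ S_{n-1}`
(`n = m + 1`), cut out by `x_{i,i+j} = x_{i,i+j-1}` for `i ∈ [1, r_j - 1]` and
`x_{i,i+j} = x_{i+1,i+j}` for `i ∈ [r_j + 1, n - j]`. -/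
def GZface {m : ℕ} (lam : Fin (m + 1) → ℝ) (w : Equiv.Perm (Fin m)) :
    Set (GZIdx (m + 1) → ℝ) :=
  {x | x ∈ GZpoly lam ∧ ∀ j, 1 ≤ j → j ≤ m → ∀ i,
    (1 ≤ i → i + 1 ≤ rv w j → GZX lam x i (i + j) = GZX lam x i (i + j - 1)) ∧
    (rv w j + 1 ≤ i → i ≤ m + 1 - j → GZX lam x i (i + j) = GZX lam x (i + 1) (i + j))}

namespace GZAux
variable {m : ℕ}

lemma rv_pos (w : Equiv.Perm (Fin m)) {j : ℕ} (h1 : 1 ≤ j) (h2 : j ≤ m) : 1 ≤ rv w j := by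
  rw [rv, dif_pos ⟨h1, h2⟩]
  exact Finset.card_pos.mpr ⟨⟨j - 1, by omega⟩, by simp [rvecL]⟩

lemma rv_le (w : Equiv.Perm (Fin m)) {j : ℕ} (h1 : 1 ≤ j) (h2 : j ≤ m) :
    rv w j ≤ m + 1 - j := by
  rw [rv, dif_pos ⟨h1, h2⟩, rvecL]
  have hsub : (Finset.univ.filter
      (fun k : Fin m => (⟨j - 1, by omega⟩ : Fin m) ≤ k ∧ w⁻¹ ⟨j - 1, by omega⟩ ≤ w⁻¹ k))
      ⊆ Finset.Ici (⟨j - 1, by omega⟩ : Fin m) := by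
    intro k hk
    simp only [Finset.mem_filter] at hk
    exact Finset.mem_Ici.mpr hk.2.1
  have := Finset.card_le_card hsub
  rw [Fin.card_Ici] at this
  simp only [Fin.val_mk] at this
  omega

variable (lam : Fin (m + 1) → ℝ) (w : Equiv.Perm (Fin m))

def fval (t : ℕ → ℝ) : ℕ → ℕ → ℝ
  | i, 0 => if h : 1 ≤ i ∧ i ≤ m + 1 then lam ⟨i - 1, by omega⟩ else 0
  | i, g + 1 =>
    if i < rv w (g + 1) then fval t i g
    else if i = rv w (g + 1) then t (g + 1)
    else fval t (i + 1) g

def dval (w : Equiv.Perm (Fin m)) : ℕ → ℕ → ℕ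
  | _, 0 => 0
  | i, g + 1 =>
    if i < rv w (g + 1) then dval w i g
    else if i = rv w (g + 1) then g + 1
    else dval w (i + 1) g

lemma fval_sub (t s : ℕ → ℝ) (g i : ℕ) :
    fval lam w t i g - fval lam w s i g =
      if dval w i g = 0 then 0 else t (dval w i g) - s (dval w i g) := by
  induction g generalizing i with
  | zero => simp [fval, dval]
  | succ g ih =>
    rw [fval, fval, dval]
    split
    · exact ih i
    · split
      · simp
      · exact ih (i + 1)

lemma dval_cases (g i : ℕ) : dval w i g = 0 ∨ (1 ≤ dval w i g ∧ dval w i g ≤ g) := by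
  induction g generalizing i with
  | zero => simp [dval]
  | succ g ih =>
    rw [dval]
    split
    · rcases ih i with h | h
      · exact Or.inl h
      · exact Or.inr ⟨h.1, by omega⟩
    · split
      · exact Or.inr ⟨by omega, le_refl _⟩
      · rcases ih (i + 1) with h | h
        · exact Or.inl h
        · exact Or.inr ⟨h.1, by omega⟩

lemma fval_pert {ε : ℝ} (hε : 0 ≤ ε) {s t : ℕ → ℝ}
    (h : ∀ j, s j ≤ t j ∧ t j ≤ s j + ε) (g i : ℕ) :
    fval lam w s i g ≤ fval lam w t i g ∧ fval lam w t i g ≤ fval lam w s i g + ε := by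
  induction g generalizing i with
  | zero => rw [fval, fval]; constructor <;> [exact le_refl _; linarith]
  | succ g ih =>
    rw [fval, fval]
    split
    · exact ih i
    · split
      · exact h (g + 1)
      · exact ih (i + 1)

lemma fval_congr {s t : ℕ → ℝ} (g : ℕ) (h : ∀ j, 1 ≤ j → j ≤ g → t j = s j) (i : ℕ) :
    fval lam w t i g = fval lam w s i g := by
  induction g generalizing i with
  | zero => rw [fval, fval]
  | succ g ih =>
    have h' : ∀ j, 1 ≤ j → j ≤ g → t j = s j := fun j a b => h j a (by omega)
    rw [fval, fval]
    split
    · exact ih h' i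
    · split
      · exact h (g + 1) (by omega) le_rfl
      · exact ih h' (i + 1)


/-- sandwich condition for levels `1..G` -/
def GoodUpTo (t : ℕ → ℝ) (G : ℕ) : Prop :=
  ∀ j, 1 ≤ j → j ≤ G →
    fval lam w t (rv w j + 1) (j - 1) < t j ∧ t j < fval lam w t (rv w j) (j - 1)

lemma fval_strictAnti (hstrict : ∀ i j : Fin (m + 1), i < j → lam j < lam i) {t : ℕ → ℝ} :
    ∀ g, g ≤ m → GoodUpTo lam w t g →
      ∀ i, 1 ≤ i → i + 1 ≤ m + 1 - g → fval lam w t (i + 1) g < fval lam w t i g := by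
  intro g
  induction g with
  | zero =>
    intro _ _ i h1 h2
    rw [fval, fval, dif_pos (by omega : 1 ≤ i + 1 ∧ i + 1 ≤ m + 1),
      dif_pos (by omega : 1 ≤ i ∧ i ≤ m + 1)]
    exact hstrict ⟨i - 1, by omega⟩ ⟨i + 1 - 1, by omega⟩ (by simp; omega)
  | succ g ih =>
    intro hgm hgood i h1 h2
    have hgm' : g ≤ m := by omega
    have hgood' : GoodUpTo lam w t g := fun j a b => hgood j a (by omega)
    have hr1 : 1 ≤ rv w (g + 1) := rv_pos w (by omega) (by omega)
    have hr2 : rv w (g + 1) ≤ m + 1 - (g + 1) := rv_le w (by omega) (by omega)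
    have hsand := hgood (g + 1) (by omega) (by omega)
    simp only [Nat.add_sub_cancel] at hsand
    have ihs := ih hgm' hgood'
    rw [fval, fval]
    rcases lt_trichotomy (i + 1) (rv w (g + 1)) with hc | hc | hc
    · rw [if_pos hc, if_pos (by omega)]
      exact ihs i h1 (by omega)
    · rw [if_neg (by omega), if_pos hc, if_pos (by omega)]
      calc t (g + 1) < fval lam w t (rv w (g + 1)) g := hsand.2
        _ = fval lam w t (i + 1) g := by rw [hc]
        _ < fval lam w t i g := ihs i h1 (by omega)
    · rw [if_neg (by omega), if_neg (by omega)]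
      rcases lt_trichotomy i (rv w (g + 1)) with hd | hd | hd
      · omega
      · rw [if_neg (by omega), if_pos hd]
        calc fval lam w t (i + 1 + 1) g < fval lam w t (i + 1) g :=
              ihs (i + 1) (by omega) (by omega)
          _ = fval lam w t (rv w (g + 1) + 1) g := by rw [hd]
          _ < t (g + 1) := hsand.1
      · rw [if_neg (by omega), if_neg (by omega)]
        exact ihs (i + 1) (by omega) (by omega)


noncomputable def Phi (t : ℕ → ℝ) : GZIdx (m + 1) → ℝ :=
  fun p => fval lam w t (p.1.1.val + 1) (p.1.2.val - p.1.1.val)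

lemma GZX_Phi (t : ℕ → ℝ) {i j : ℕ} (h1 : 1 ≤ i) (h2 : i ≤ j) (h3 : j ≤ m + 1) :
    GZX lam (Phi lam w t) i j = fval lam w t i (j - i) := by
  rw [GZX, dif_pos ⟨h1, h2, h3⟩]
  rcases eq_or_lt_of_le h2 with he | hlt
  · rw [dif_neg (by omega)]
    subst he
    rw [Nat.sub_self, fval, dif_pos ⟨h1, h3⟩]
  · rw [dif_pos hlt]
    show fval lam w t (i - 1 + 1) (j - 1 - (i - 1)) = fval lam w t i (j - i)
    rw [show i - 1 + 1 = i from by omega, show j - 1 - (i - 1) = j - i from by omega]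

lemma GZX_eta (x : GZIdx (m + 1) → ℝ) (p : GZIdx (m + 1)) :
    GZX lam x (p.1.1.val + 1) (p.1.2.val + 1) = x p := by
  have hp : (p.1.1 : ℕ) < p.1.2 := p.2
  rw [GZX, dif_pos ⟨by omega, by omega, by omega⟩, dif_pos (by omega)]
  congr 1

lemma Phi_mem (hstrict : ∀ i j : Fin (m + 1), i < j → lam j < lam i)
    {t : ℕ → ℝ} (hgood : GoodUpTo lam w t m) : Phi lam w t ∈ GZface lam w := by
  have hSA : ∀ g, g ≤ m → ∀ i, 1 ≤ i → i + 1 ≤ m + 1 - g →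
      fval lam w t (i + 1) g < fval lam w t i g := fun g hg =>
    fval_strictAnti lam w hstrict g hg (fun j a b => hgood j a (by omega))
  constructor
  · intro i j h1 h2 h3
    have hb1 : GZX lam (Phi lam w t) i (j + 1) = fval lam w t i (j - i + 1) := by
      rw [GZX_Phi lam w t h1 (by omega) (by omega), show j + 1 - i = j - i + 1 from by omega]
    have hb2 : GZX lam (Phi lam w t) i j = fval lam w t i (j - i) :=
      GZX_Phi lam w t h1 h2 (by omega)
    have hb3 : GZX lam (Phi lam w t) (i + 1) (j + 1) = fval lam w t (i + 1) (j - i) := by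
      rw [GZX_Phi lam w t (by omega) (by omega) (by omega),
        show j + 1 - (i + 1) = j - i from by omega]
    rw [hb1, hb2, hb3]
    set g := j - i with hg
    have hgm : g ≤ m := by omega
    have hi2 : i + 1 ≤ m + 1 - g := by omega
    rw [fval]
    rcases lt_trichotomy i (rv w (g + 1)) with hc | hc | hc
    · rw [if_pos hc]
      exact ⟨le_refl _, (hSA g hgm i h1 hi2).le⟩
    · rw [if_neg (by omega), if_pos hc]
      have hg1m : g + 1 ≤ m := by
        by_contra hcon
        have : rv w (g + 1) = 0 := by rw [rv, dif_neg (by omega)]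
        omega
      have hsand := hgood (g + 1) (by omega) hg1m
      simp only [Nat.add_sub_cancel] at hsand
      rw [← hc] at hsand
      exact ⟨hsand.2.le, hsand.1.le⟩
    · rw [if_neg (by omega), if_neg (by omega)]
      exact ⟨(hSA g hgm i h1 hi2).le, le_refl _⟩
  · intro j hj1 hjm i
    have hr1 : 1 ≤ rv w j := rv_pos w hj1 hjm
    have hr2 : rv w j ≤ m + 1 - j := rv_le w hj1 hjm
    obtain ⟨j', rfl⟩ : ∃ j', j = j' + 1 := ⟨j - 1, by omega⟩
    constructor
    · intro hi1 hirv
      have hij : i + (j' + 1) ≤ m + 1 := by omega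
      rw [GZX_Phi lam w t hi1 (by omega) hij,
        GZX_Phi lam w t hi1 (by omega) (by omega),
        show i + (j' + 1) - i = j' + 1 from by omega,
        show i + (j' + 1) - 1 - i = j' from by omega]
      rw [fval, if_pos (by omega)]
    · intro hirv him
      have hi1 : 1 ≤ i := by omega
      rw [GZX_Phi lam w t hi1 (by omega) (by omega),
        GZX_Phi lam w t (by omega) (by omega) (by omega),
        show i + (j' + 1) - i = j' + 1 from by omega,
        show i + (j' + 1) - (i + 1) = j' from by omega]
      rw [fval, if_neg (by omega), if_neg (by omega)]

lemma face_repr {x : GZIdx (m + 1) → ℝ} (hx : x ∈ GZface lam w) :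
    ∀ g, g ≤ m → ∀ i, 1 ≤ i → i + g ≤ m + 1 →
      GZX lam x i (i + g) =
        fval lam w (fun j => GZX lam x (rv w j) (rv w j + j)) i g := by
  intro g
  induction g with
  | zero =>
    intro _ i h1 h2
    rw [fval, dif_pos ⟨h1, by omega⟩, GZX, dif_pos ⟨h1, by omega, by omega⟩,
      dif_neg (by omega)]
  | succ g ih =>
    intro hgm i h1 h2
    have hg1m : g + 1 ≤ m := by omega
    have hface := hx.2 (g + 1) (by omega) hg1m i
    rw [fval]
    rcases lt_trichotomy i (rv w (g + 1)) with hc | hc | hc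
    · rw [if_pos hc, ← ih (by omega) i h1 (by omega)]
      have := hface.1 h1 (by omega)
      rw [this, show i + (g + 1) - 1 = i + g from by omega]
    · rw [if_neg (by omega), if_pos hc, ← hc]
    · rw [if_neg (by omega), if_neg (by omega), ← ih (by omega) (i + 1) (by omega) (by omega)]
      have hr2 : rv w (g + 1) ≤ m + 1 - (g + 1) := rv_le w (by omega) hg1m
      have := hface.2 (by omega) (by omega)
      rw [this, show i + 1 + g = i + (g + 1) from by omega]

lemma face_eq_Phi {x : GZIdx (m + 1) → ℝ} (hx : x ∈ GZface lam w) :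
    x = Phi lam w (fun j => GZX lam x (rv w j) (rv w j + j)) := by
  funext p
  have hp : (p.1.1 : ℕ) < p.1.2 := p.2
  have h2 : (p.1.2 : ℕ) < m + 1 := p.1.2.isLt
  rw [← GZX_eta lam x p]
  show _ = fval lam w _ (p.1.1.val + 1) (p.1.2.val - p.1.1.val)
  rw [← face_repr lam w hx (p.1.2.val - p.1.1.val) (by omega) (p.1.1.val + 1) (by omega)
    (by omega), show p.1.1.val + 1 + (p.1.2.val - p.1.1.val) = p.1.2.val + 1 from by omega]


noncomputable def t0 (j : ℕ) : ℝ :=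
    (fval lam w (fun k => if h : k < j then t0 k else 0) (rv w j) (j - 1) +
     fval lam w (fun k => if h : k < j then t0 k else 0) (rv w j + 1) (j - 1)) / 2
termination_by j
decreasing_by all_goals exact h

lemma t0_eq (j : ℕ) (hj : 1 ≤ j) :
    t0 lam w j = (fval lam w (t0 lam w) (rv w j) (j - 1) +
                  fval lam w (t0 lam w) (rv w j + 1) (j - 1)) / 2 := by
  rw [t0]
  have hc : ∀ i, fval lam w (fun k => if h : k < j then t0 lam w k else 0) i (j - 1) =
      fval lam w (t0 lam w) i (j - 1) :=
    fval_congr lam w (j - 1) (fun k hk1 hk2 => by rw [dif_pos (by omega)])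
  rw [hc, hc]

lemma good_t0 (hstrict : ∀ i j : Fin (m + 1), i < j → lam j < lam i) :
    GoodUpTo lam w (t0 lam w) m := by
  intro j
  induction j using Nat.strong_induction_on with
  | _ j ih =>
    intro hj1 hjm
    have hpart : GoodUpTo lam w (t0 lam w) (j - 1) := fun j' h1 h2 =>
      ih j' (by omega) h1 (by omega)
    have hr1 : 1 ≤ rv w j := rv_pos w hj1 hjm
    have hr2 : rv w j ≤ m + 1 - j := rv_le w hj1 hjm
    have hBA : fval lam w (t0 lam w) (rv w j + 1) (j - 1) <
        fval lam w (t0 lam w) (rv w j) (j - 1) :=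
      fval_strictAnti lam w hstrict (j - 1) (by omega) hpart (rv w j) hr1 (by omega)
    rw [t0_eq lam w j hj1]
    constructor <;> linarith

end GZAux

namespace GZAux
variable {m : ℕ}

lemma sum_ite_eq' (c : ℕ → ℝ) (d : ℕ) (hd : d = 0 ∨ (1 ≤ d ∧ d ≤ m)) :
    (∑ k : Fin m, if d = k.val + 1 then c (k.val + 1) else 0) =
      if d = 0 then (0 : ℝ) else c d := by
  rcases hd with rfl | ⟨h1, h2⟩
  · rw [if_pos rfl]
    apply Finset.sum_eq_zero
    intro k _
    rw [if_neg (by omega)]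
  · rw [if_neg (by omega)]
    rw [Finset.sum_eq_single (⟨d - 1, by omega⟩ : Fin m)]
    · rw [if_pos (by simp; omega)]
      congr 1
      simp; omega
    · intro b _ hb
      rw [if_neg ?_]
      intro hcon
      apply hb
      apply Fin.ext
      simp; omega
    · intro hcon
      exact absurd (Finset.mem_univ _) hcon

end GZAux

open GZAux in
theorem stmt6 (m : ℕ) (lam : Fin (m + 1) → ℝ)
    (hstrict : ∀ i j : Fin (m + 1), i < j → lam j < lam i)
    (h0 : ∀ i, 0 ≤ lam i) (w : Equiv.Perm (Fin m)) :
    Module.finrank ℝ (affineSpan ℝ (GZface lam w)).direction = m := by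
  classical
  have hupper : Module.finrank ℝ (affineSpan ℝ (GZface lam w)).direction ≤ m := by
    set L : Fin m → (GZIdx (m + 1) → ℝ) := fun k p =>
      if dval w (p.1.1.val + 1) (p.1.2.val - p.1.1.val) = k.val + 1 then (1 : ℝ) else 0
      with hL
    rw [direction_affineSpan, vectorSpan_def]
    have hspan : Submodule.span ℝ (GZface lam w -ᵥ GZface lam w) ≤
        Submodule.span ℝ (Set.range L) := by
      apply Submodule.span_le.mpr
      intro z hz
      rw [Set.mem_vsub] at hz
      obtain ⟨x, hx, y, hy, rfl⟩ := hz
      have hxr := face_eq_Phi lam w hx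
      have hyr := face_eq_Phi lam w hy
      have hxy : x -ᵥ y = ∑ k : Fin m,
          ((GZX lam x (rv w (k.val + 1)) (rv w (k.val + 1) + (k.val + 1)) -
            GZX lam y (rv w (k.val + 1)) (rv w (k.val + 1) + (k.val + 1)))) • L k := by
        rw [vsub_eq_sub]
        funext p
        have hp : (p.1.1 : ℕ) < p.1.2 := p.2
        have hgm : (p.1.2.val - p.1.1.val : ℕ) ≤ m := by have := p.1.2.isLt; omega
        rw [Pi.sub_apply, Finset.sum_apply]
        have hxp : x p = fval lam w (fun j => GZX lam x (rv w j) (rv w j + j))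
            (p.1.1.val + 1) (p.1.2.val - p.1.1.val) := by
          conv_lhs => rw [hxr]
          rfl
        have hyp : y p = fval lam w (fun j => GZX lam y (rv w j) (rv w j + j))
            (p.1.1.val + 1) (p.1.2.val - p.1.1.val) := by
          conv_lhs => rw [hyr]
          rfl
        rw [hxp, hyp, fval_sub lam w]
        have hterm : ∀ k : Fin m,
            ((GZX lam x (rv w (k.val + 1)) (rv w (k.val + 1) + (k.val + 1)) -
              GZX lam y (rv w (k.val + 1)) (rv w (k.val + 1) + (k.val + 1))) • L k) p =
            (if dval w (p.1.1.val + 1) (p.1.2.val - p.1.1.val) = k.val + 1 then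
              (fun j => GZX lam x (rv w j) (rv w j + j)) (k.val + 1) -
              (fun j => GZX lam y (rv w j) (rv w j + j)) (k.val + 1) else 0) := by
          intro k
          simp only [Pi.smul_apply, hL, smul_eq_mul]
          split <;> simp
        rw [Finset.sum_congr rfl (fun k _ => hterm k)]
        have hcases : dval w (p.1.1.val + 1) (p.1.2.val - p.1.1.val) = 0 ∨
            (1 ≤ dval w (p.1.1.val + 1) (p.1.2.val - p.1.1.val) ∧
             dval w (p.1.1.val + 1) (p.1.2.val - p.1.1.val) ≤ m) := by
          rcases dval_cases w (p.1.2.val - p.1.1.val) (p.1.1.val + 1) with h | h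
          · exact Or.inl h
          · exact Or.inr ⟨h.1, by omega⟩
        exact (sum_ite_eq' (fun j => GZX lam x (rv w j) (rv w j + j) -
          GZX lam y (rv w j) (rv w j + j)) _ hcases).symm
      rw [hxy]
      exact Submodule.sum_mem _ fun k _ =>
        Submodule.smul_mem _ _ (Submodule.subset_span ⟨k, rfl⟩)
    have h2 : Module.finrank ℝ (Submodule.span ℝ (GZface lam w -ᵥ GZface lam w)) ≤
        Module.finrank ℝ (Submodule.span ℝ (Set.range L)) := Submodule.finrank_mono hspan
    refine h2.trans ?_
    have h1 := finrank_span_le_card (R := ℝ) (Set.range L)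
    rw [Set.toFinset_range] at h1
    refine h1.trans (Finset.card_image_le.trans (by simp))
  refine le_antisymm hupper ?_
  rcases Nat.eq_zero_or_pos m with rfl | hm
  · exact Nat.zero_le _
  have hgood0 : GoodUpTo lam w (t0 lam w) m := good_t0 lam w hstrict
  set T := t0 lam w with hT
  have hne : (Finset.Icc 1 m).Nonempty := ⟨1, Finset.mem_Icc.mpr ⟨le_refl _, hm⟩⟩
  set gap : ℕ → ℝ := fun j => min (fval lam w T (rv w j) (j - 1) - T j)
      (T j - fval lam w T (rv w j + 1) (j - 1)) with hgap
  have hgappos : ∀ j ∈ Finset.Icc 1 m, (0:ℝ) < gap j := by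
    intro j hj
    rw [Finset.mem_Icc] at hj
    have h := hgood0 j hj.1 hj.2
    rw [hgap]
    exact lt_min (by linarith [h.2]) (by linarith [h.1])
  set ε := (Finset.Icc 1 m).inf' hne gap / 2 with hε
  have hinfpos : 0 < (Finset.Icc 1 m).inf' hne gap := (Finset.lt_inf'_iff hne).mpr hgappos
  have hεpos : 0 < ε := by rw [hε]; linarith
  have hεlt : ∀ j, 1 ≤ j → j ≤ m → ε < gap j := by
    intro j h1 h2
    have := Finset.inf'_le gap (Finset.mem_Icc.mpr ⟨h1, h2⟩)
    rw [hε]; linarith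
  set tk : Fin m → ℕ → ℝ := fun k j => if j = k.val + 1 then T j - ε else T j with htk
  have hgoodk : ∀ k, GoodUpTo lam w (tk k) m := by
    intro k j hj1 hjm
    have hpert := fval_pert lam w hεpos.le (s := tk k) (t := T)
      (fun j => by rw [htk]; dsimp only; split <;> constructor <;> linarith)
    have hsand := hgood0 j hj1 hjm
    have hg := hεlt j hj1 hjm
    have hg1 : gap j ≤ fval lam w T (rv w j) (j - 1) - T j := min_le_left _ _
    have hg2 : gap j ≤ T j - fval lam w T (rv w j + 1) (j - 1) := min_le_right _ _
    have htkj1 : T j - ε ≤ tk k j := by rw [htk]; dsimp only; split <;> linarith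
    have htkj2 : tk k j ≤ T j := by rw [htk]; dsimp only; split <;> linarith
    constructor
    · have := (hpert (j - 1) (rv w j + 1)).1
      linarith
    · have := (hpert (j - 1) (rv w j)).2
      linarith
  have hmemk : ∀ k : Fin m, Phi lam w (tk k) ∈ GZface lam w := fun k =>
    Phi_mem lam w hstrict (hgoodk k)
  have hmem0 : Phi lam w T ∈ GZface lam w := Phi_mem lam w hstrict hgood0
  set v : Fin m → (GZIdx (m + 1) → ℝ) := fun k => Phi lam w (tk k) - Phi lam w T with hv
  have hvdir : ∀ k, v k ∈ (affineSpan ℝ (GZface lam w)).direction := by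
    intro k
    rw [hv]
    dsimp only
    rw [← vsub_eq_sub]
    exact AffineSubspace.vsub_mem_direction (subset_affineSpan ℝ _ (hmemk k))
      (subset_affineSpan ℝ _ hmem0)
  have hrk1 : ∀ k : Fin m, 1 ≤ rv w (k.val + 1) := fun k =>
    rv_pos w (by omega) (by have := k.isLt; omega)
  have hrk2 : ∀ k : Fin m, rv w (k.val + 1) + k.val ≤ m := fun k => by
    have := rv_le w (j := k.val + 1) (by omega) (by have := k.isLt; omega); omega
  set spot : Fin m → GZIdx (m + 1) := fun k =>
    ⟨(⟨rv w (k.val + 1) - 1, by have := hrk2 k; omega⟩,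
      ⟨rv w (k.val + 1) + k.val, by have := hrk2 k; omega⟩),
      Fin.mk_lt_mk.mpr (by have := hrk1 k; omega)⟩ with hspot
  have hPhispot : ∀ (t : ℕ → ℝ) (k : Fin m), Phi lam w t (spot k) = t (k.val + 1) := by
    intro t k
    rw [hspot]
    show fval lam w t ((rv w (k.val + 1) - 1) + 1)
      ((rv w (k.val + 1) + k.val) - (rv w (k.val + 1) - 1)) = _
    rw [show (rv w (k.val + 1) - 1) + 1 = rv w (k.val + 1) from by have := hrk1 k; omega,
        show (rv w (k.val + 1) + k.val) - (rv w (k.val + 1) - 1) = k.val + 1 from by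
          have := hrk1 k; omega]
    rw [fval, if_neg (lt_irrefl _), if_pos rfl]
  have hvspot : ∀ k j : Fin m, v k (spot j) = if j = k then -ε else 0 := by
    intro k j
    rw [hv]
    dsimp only [Pi.sub_apply]
    rw [hPhispot, hPhispot, htk]
    dsimp only
    by_cases h : j = k
    · subst h
      rw [if_pos rfl, if_pos rfl]
      ring
    · rw [if_neg (fun hcon => h (Fin.ext (by omega))), if_neg h]
      ring
  have hli' : LinearIndependent ℝ (⇑(LinearMap.funLeft ℝ ℝ spot) ∘ v) := by
    have hcomp : ⇑(LinearMap.funLeft ℝ ℝ spot) ∘ v = fun k => Pi.single k (-ε) := by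
      funext k j
      simp only [Function.comp_apply, LinearMap.funLeft_apply, Pi.single_apply]
      exact hvspot k j
    rw [hcomp]
    have hb := (Pi.basisFun ℝ (Fin m)).linearIndependent
    have hs := hb.units_smul (fun _ => Units.mk0 (-ε) (by linarith))
    convert hs using 1
    funext k
    funext j
    simp only [Pi.smul_apply', Pi.smul_apply, Pi.basisFun_apply, Units.smul_def,
      Units.val_mk0, Pi.single_apply, smul_eq_mul]
    split <;> simp
  have hli : LinearIndependent ℝ v := LinearIndependent.of_comp _ hli'
  have hu : LinearIndependent ℝ
      (fun k => (⟨v k, hvdir k⟩ : (affineSpan ℝ (GZface lam w)).direction)) := by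
    apply LinearIndependent.of_comp ((affineSpan ℝ (GZface lam w)).direction.subtype)
    exact hli
  have hcard := hu.fintype_card_le_finrank
  simpa using hcard
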